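/- Let I be a function on a set S with values in a commutative ℚ-algebra A satisfying the unit relation and the shuffle product formula (relations (i) and (ii) of an iterated-integral symbol; relations (iii) and (iv) are not needed). Then for every m ≥ 1 and all a_0, a_1, ..., a_{m+1} ∈ S one has I(a_0; a_1, ..., a_m; a_{m+1}) + Σ_{k=0}^{m−1} (−1)^{m−k} · I(a_0; a_1, ..., a_k; a_{m+1}) · I(a_0; a_m, a_{m−1}, ..., a_{k+1}; a_{m+1}) = 0. -/

import Mathlib

/-!
STATEMENT 1. If `I` satisfies the unit relation and the shuffle product formula, then
for every `m ≥ 1` and `a₀, …, a_{m+1} ∈ S`,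
`I(a₀; a₁, …, a_m; a_{m+1}) + Σ_{k=0}^{m−1} (−1)^{m−k} I(a₀; a₁, …, a_k; a_{m+1}) ·
I(a₀; a_m, …, a_{k+1}; a_{m+1}) = 0`.
-/

/-- The multiset of all shuffles of two lists. -/
def shuffles {α : Type*} : List α → List α → Multiset (List α)
  | [], l => {l}
  | x :: l, [] => {x :: l}
  | a :: l, b :: m =>
      ((shuffles l (b :: m)).map (a :: ·)) + ((shuffles (a :: l) m).map (b :: ·))
  termination_by l m => l.length + m.length

/-- A function on a set `S`, with values in a commutative ℚ-algebra `A`, satisfying the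
unit relation (i) and the shuffle product formula (ii) of an iterated-integral symbol. -/
lemma shuffles_nil_left {α : Type*} (l : List α) : shuffles [] l = {l} := by
  cases l <;> simp [shuffles]

lemma shuffles_nil_right {α : Type*} (l : List α) : shuffles l [] = {l} := by
  cases l <;> simp [shuffles]

lemma shuffles_cons_cons {α : Type*} (a b : α) (l m : List α) :
    shuffles (a :: l) (b :: m) =
      ((shuffles l (b :: m)).map (a :: ·)) + ((shuffles (a :: l) m).map (b :: ·)) := by
  rw [shuffles]

lemma shuffles_concat {α : Type*} (x y : α) : ∀ u v : List α,
    shuffles (u ++ [x]) (v ++ [y]) =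
      ((shuffles u (v ++ [y])).map (· ++ [x])) + ((shuffles (u ++ [x]) v).map (· ++ [y]))
  | [], [] => by simp [shuffles_cons_cons, shuffles_nil_left, shuffles_nil_right, add_comm]
  | [], b :: v => by
    have ih := shuffles_concat x y [] v
    simp only [List.nil_append] at ih
    simp only [List.nil_append, List.cons_append, shuffles_cons_cons, shuffles_nil_left, ih,
      Multiset.map_map, Multiset.map_add, Function.comp, Multiset.map_singleton]
    abel
  | a :: u, [] => by
    have ih := shuffles_concat x y u []
    simp only [List.nil_append] at ih
    simp only [List.nil_append, List.cons_append, shuffles_cons_cons, shuffles_nil_right, ih,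
      Multiset.map_map, Multiset.map_add, Function.comp, Multiset.map_singleton]
    abel
  | a :: u, b :: v => by
    have ih1 := shuffles_concat x y u (b :: v)
    have ih2 := shuffles_concat x y (a :: u) v
    simp only [List.cons_append] at ih1 ih2 ⊢
    rw [shuffles_cons_cons a b (u ++ [x]) (v ++ [y]), ih1, ih2,
      shuffles_cons_cons a b u (v ++ [y]), shuffles_cons_cons a b (u ++ [x]) v]
    simp only [Multiset.map_add, Multiset.map_map, Function.comp, List.cons_append]
    abel
  termination_by u v => u.length + v.length

structure ShuffleSymbol (S : Type*) (A : Type*) [CommRing A] [Algebra ℚ A] where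
  I : S → List S → S → A
  unit : ∀ a b : S, I a [] b = 1
  shuffle_mul : ∀ (a b : S) (l₁ l₂ : List S),
    I a l₁ b * I a l₂ b = ((shuffles l₁ l₂).map fun w => I a w b).sum

theorem shuffleSymbol_alternating_sum {S A : Type*} [CommRing A] [Algebra ℚ A]
    (𝕀 : ShuffleSymbol S A) (a b : S) (l : List S) (hl : l ≠ []) :
    𝕀.I a l b + ∑ k ∈ Finset.range l.length,
      (-1 : A) ^ (l.length - k) * 𝕀.I a (l.take k) b * 𝕀.I a ((l.drop k).reverse) b = 0 := by
  set m := l.length with hm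
  have hm1 : 1 ≤ m := by rw [hm]; exact List.length_pos_iff.mpr hl
  have ht : l.take m = l := by rw [hm]; exact List.take_length
  have hd : l.drop m = [] := by rw [hm]; exact List.drop_length
  set f : ℕ → A := fun k => 𝕀.I a (l.take k) b * 𝕀.I a ((l.drop k).reverse) b with hf
  set g : ℕ → A := fun k => ((shuffles (l.take k) ((l.drop (k+1)).reverse)).map
      (fun w => 𝕀.I a (w ++ [l.getD k a]) b)).sum with hg
  have htake : ∀ k < m, l.take (k+1) = l.take k ++ [l.getD k a] := by
    intro k hk
    rw [List.take_succ, List.getElem?_eq_getElem (hm ▸ hk), List.getD_eq_getElem l a (hm ▸ hk)]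
    rfl
  have hdrop : ∀ k < m, (l.drop k).reverse = (l.drop (k+1)).reverse ++ [l.getD k a] := by
    intro k hk
    rw [List.drop_eq_getElem_cons (hm ▸ hk), List.reverse_cons, List.getD_eq_getElem l a (hm ▸ hk)]
  have key : ∀ k ≤ m, f k = (if k = 0 then 0 else g (k-1)) + (if k = m then 0 else g k) := by
    intro k hk
    rcases Nat.eq_zero_or_pos k with rfl | hk0
    · have hkm : (0 : ℕ) ≠ m := by omega
      have h := hdrop 0 (by omega)
      rw [List.drop_zero] at h
      simp only [if_pos rfl, if_neg hkm, zero_add, hf, hg]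
      rw [List.take_zero, List.drop_zero, 𝕀.shuffle_mul, shuffles_nil_left, h, shuffles_nil_left]
      simp
    rcases eq_or_ne k m with rfl | hkm
    · have h : l.take (m-1) ++ [l.getD (m-1) a] = l := by
        rw [← htake (m-1) (by omega), show m - 1 + 1 = m from by omega, ht]
      simp only [if_neg (by omega : ¬ m = 0), if_pos rfl, add_zero, hf, hg]
      rw [𝕀.shuffle_mul, hd, List.reverse_nil, shuffles_nil_right,
        show m - 1 + 1 = m from by omega, hd, List.reverse_nil, shuffles_nil_right]
      rw [Multiset.map_singleton, Multiset.sum_singleton, Multiset.map_singleton,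
        Multiset.sum_singleton, h, ht]
      simp
    · obtain ⟨j, rfl⟩ : ∃ j, k = j + 1 := ⟨k - 1, by omega⟩
      have hkm' : j + 1 < m := lt_of_le_of_ne hk hkm
      simp only [if_neg (by omega : ¬ j + 1 = 0), if_neg hkm, Nat.add_sub_cancel, hf, hg]
      rw [𝕀.shuffle_mul, htake j (by omega), hdrop (j+1) hkm', shuffles_concat,
        ← htake j (by omega), ← hdrop (j+1) hkm']
      simp only [Multiset.map_add, Multiset.sum_add, Multiset.map_map, Function.comp]
  have main : ∑ k ∈ Finset.range (m+1), (-1 : A) ^ (m - k) * f k = 0 := by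
    have hcong : ∀ k ∈ Finset.range (m+1), (-1 : A) ^ (m - k) * f k
        = (-1 : A) ^ (m - k) * (if k = 0 then 0 else g (k-1))
          + (-1 : A) ^ (m - k) * (if k = m then 0 else g k) := by
      intro k hk
      rw [key k (Nat.lt_succ_iff.mp (Finset.mem_range.mp hk)), mul_add]
    rw [Finset.sum_congr rfl hcong, Finset.sum_add_distrib]
    rw [Finset.sum_range_succ' (fun k => (-1 : A) ^ (m - k) * (if k = 0 then 0 else g (k-1)))]
    rw [Finset.sum_range_succ (fun k => (-1 : A) ^ (m - k) * (if k = m then 0 else g k))]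
    simp only [if_pos rfl, if_true, mul_zero, add_zero]
    rw [← Finset.sum_add_distrib]
    apply Finset.sum_eq_zero
    intro k hk
    have hk' : k < m := Finset.mem_range.mp hk
    rw [if_neg (by omega : ¬ k + 1 = 0), if_neg (by omega : ¬ k = m), Nat.add_sub_cancel]
    have h1 : m - k = (m - (k+1)) + 1 := by omega
    rw [h1, pow_succ]
    ring
  have hrw : 𝕀.I a l b + ∑ k ∈ Finset.range m,
      (-1 : A) ^ (m - k) * 𝕀.I a (l.take k) b * 𝕀.I a ((l.drop k).reverse) b
      = ∑ k ∈ Finset.range (m+1), (-1 : A) ^ (m - k) * f k := by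
    rw [Finset.sum_range_succ]
    have h1 : (-1 : A) ^ (m - m) * f m = 𝕀.I a l b := by
      simp only [Nat.sub_self, pow_zero, one_mul, hf]
      rw [ht, hd, List.reverse_nil, 𝕀.unit, mul_one]
    rw [h1, add_comm]
    congr 1
    exact Finset.sum_congr rfl fun k _ => by rw [hf, ← mul_assoc]
  rw [hrw, main]
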